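/- Let X ∼ DPP(K) on {1,...,n}, let p_1,...,p_n ∈ [0,1], and let B_1,...,B_n be independent Bernoulli(p_i) variables independent of X. Define X̃ = {i : (i ∈ X and B_i = 0) or (i ∉ X and B_i = 1)}. Then X̃ ∼ DPP(D(p)(I_n − K) + D(1_n − p)K). -/

import Mathlib

open Matrix BigOperators Finset

/-- The principal minor of `M` indexed by the subset `S`. -/
noncomputable def pminor {n : ℕ} (M : Matrix (Fin n) (Fin n) ℝ) (S : Finset (Fin n)) : ℝ :=
  (M.submatrix (fun i : {x // x ∈ S} => (i : Fin n)) (fun i : {x // x ∈ S} => (i : Fin n))).det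

lemma det_unit_rows {ι : Type*} [Fintype ι] [DecidableEq ι] (s : Finset ι)
    (N : Matrix ι ι ℝ) (P : Matrix ι ι ℝ)
    (hP : ∀ i j, P i j = if i ∈ s then (if j = i then 1 else 0) else N i j) :
    P.det = (N.submatrix (fun x : {a // ¬ a ∈ s} => (x : ι))
      (fun x : {a // ¬ a ∈ s} => (x : ι))).det := by
  rw [← Matrix.det_submatrix_equiv_self (Equiv.sumCompl (· ∈ s)) P]
  have hblock : P.submatrix (Equiv.sumCompl (· ∈ s)) (Equiv.sumCompl (· ∈ s))
      = Matrix.fromBlocks 1 0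
          (N.submatrix (fun x : {a // ¬ a ∈ s} => (x : ι)) (fun x : {a // a ∈ s} => (x : ι)))
          (N.submatrix (fun x : {a // ¬ a ∈ s} => (x : ι)) (fun x : {a // ¬ a ∈ s} => (x : ι))) := by
    ext i j
    cases i with
    | inl i =>
      cases j with
      | inl j =>
        simp only [Matrix.submatrix_apply, Equiv.sumCompl_apply_inl, hP, i.2, if_true,
          Matrix.fromBlocks_apply₁₁, Matrix.one_apply]
        by_cases h : i = j
        · simp [h]
        · rw [if_neg, if_neg h]
          exact fun hc => h (Subtype.ext hc.symm)
      | inr j =>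
        simp only [Matrix.submatrix_apply, Equiv.sumCompl_apply_inl, Equiv.sumCompl_apply_inr,
          hP, i.2, if_true, Matrix.fromBlocks_apply₁₂, Matrix.zero_apply]
        rw [if_neg]
        intro hc
        exact j.2 (hc ▸ i.2)
    | inr i =>
      cases j with
      | inl j =>
        simp [hP, i.2]
      | inr j =>
        simp [hP, i.2]
  rw [hblock, Matrix.det_fromBlocks_zero₁₂, Matrix.det_one, one_mul]

lemma det_diagonal_add {ι : Type*} [Fintype ι] [DecidableEq ι] (d : ι → ℝ)
    (N : Matrix ι ι ℝ) :
    (Matrix.diagonal d + N).det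
      = ∑ s : Finset ι, (∏ i ∈ s, d i) *
          (N.submatrix (fun x : {a // ¬ a ∈ s} => (x : ι))
            (fun x : {a // ¬ a ∈ s} => (x : ι))).det := by
  have h1 : (Matrix.diagonal d + N).det
      = (Matrix.detRowAlternating (R := ℝ) (n := ι)).toMultilinearMap
          (Matrix.diagonal d + N) := rfl
  rw [h1]
  erw [MultilinearMap.map_add_univ]
  refine Finset.sum_congr rfl fun s _ => ?_
  set m0 : ι → ι → ℝ := s.piecewise (fun i => Pi.single i (1:ℝ)) N with hm0
  have hpw : s.piecewise (Matrix.diagonal d) N = s.piecewise (fun i => d i • m0 i) m0 := by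
    funext i
    by_cases h : i ∈ s
    · simp only [Finset.piecewise, h, if_true, hm0]
      funext j
      simp [Matrix.diagonal_apply, Pi.single_apply, eq_comm]
    · simp [hm0, Finset.piecewise, h]
  rw [hpw, MultilinearMap.map_piecewise_smul]
  rw [smul_eq_mul]
  congr 1
  exact det_unit_rows s N m0 (fun i j => by
    by_cases h : i ∈ s
    · simp [hm0, Finset.piecewise, Pi.single_apply, h]
    · simp [hm0, Finset.piecewise, h])


lemma pminor_diagonal_add {n : ℕ} (d q : Fin n → ℝ) (K : Matrix (Fin n) (Fin n) ℝ)
    (T : Finset (Fin n)) :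
    pminor (Matrix.diagonal d + Matrix.diagonal q * K) T
      = ∑ S ∈ T.powerset, (∏ i ∈ T \ S, d i) * ((∏ i ∈ S, q i) * pminor K S) := by
  classical
  set c : {x // x ∈ T} → Fin n := fun i => (i : Fin n) with hc
  have heq : (Matrix.diagonal d + Matrix.diagonal q * K).submatrix c c
      = Matrix.diagonal (fun i : {x // x ∈ T} => d ↑i)
        + Matrix.of (fun i j : {x // x ∈ T} => q ↑i * K ↑i ↑j) := by
    ext i j
    simp only [Matrix.submatrix_apply, Matrix.add_apply, Matrix.diagonal_mul, Matrix.of_apply,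
      Matrix.diagonal_apply, Subtype.coe_inj, hc]
  rw [pminor, heq, det_diagonal_add]
  refine Finset.sum_nbij' (fun s : Finset {x // x ∈ T} => T \ s.image c)
    (fun S => (T \ S).subtype (· ∈ T)) (fun s _ => Finset.mem_powerset.2 (Finset.sdiff_subset))
    (fun S _ => Finset.mem_univ _) ?_ ?_ ?_
  · -- left inverse
    intro s _
    have himg : s.image c ⊆ T := by
      intro x hx
      obtain ⟨a, _, rfl⟩ := Finset.mem_image.1 hx
      exact a.2
    have h1 : T \ (T \ s.image c) = s.image c := by
      rw [Finset.sdiff_sdiff_self_left, Finset.inter_eq_right.2 himg]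
    rw [h1]
    ext a
    simp [Finset.mem_subtype, Finset.mem_image, Subtype.coe_inj, hc]
  · -- right inverse
    intro S hS
    have h1 : ((T \ S).subtype (· ∈ T)).image c = T \ S := by
      ext x
      simp only [Finset.mem_image, Finset.mem_subtype, hc]
      constructor
      · rintro ⟨a, ha, rfl⟩; exact ha
      · intro hx
        exact ⟨⟨x, (Finset.mem_sdiff.1 hx).1⟩, hx, rfl⟩
    rw [h1, Finset.sdiff_sdiff_eq_self (Finset.mem_powerset.1 hS)]
  · -- value equality
    intro s _
    set S : Finset (Fin n) := T \ s.image c with hS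
    have himg : s.image c ⊆ T := by
      intro x hx
      obtain ⟨a, _, rfl⟩ := Finset.mem_image.1 hx
      exact a.2
    have hmem : ∀ a : {a : {x // x ∈ T} // ¬ a ∈ s}, (↑↑a : Fin n) ∈ S := by
      rintro ⟨a, ha⟩
      simp only [hS, Finset.mem_sdiff]
      refine ⟨a.2, fun hx => ha ?_⟩
      obtain ⟨b, hb, hba⟩ := Finset.mem_image.1 hx
      rwa [Subtype.coe_inj.1 hba] at hb
    let eS : {a : {x // x ∈ T} // ¬ a ∈ s} ≃ {x : Fin n // x ∈ S} :=
      { toFun := fun a => ⟨↑↑a, hmem a⟩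
        invFun := fun x => ⟨⟨↑x, (Finset.mem_sdiff.1 x.2).1⟩, fun hin =>
          (Finset.mem_sdiff.1 x.2).2 (Finset.mem_image.2 ⟨_, hin, rfl⟩)⟩
        left_inv := fun a => by ext; rfl
        right_inv := fun x => rfl }
    have hdet : ((Matrix.of (fun i j : {x // x ∈ T} => q ↑i * K ↑i ↑j)).submatrix
        (fun x : {a // ¬ a ∈ s} => (x : {x // x ∈ T}))
        (fun x : {a // ¬ a ∈ s} => (x : {x // x ∈ T}))).det
        = (∏ i ∈ S, q i) * pminor K S := by
      have hm : (Matrix.of (fun i j : {x // x ∈ T} => q ↑i * K ↑i ↑j)).submatrix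
          (fun x : {a // ¬ a ∈ s} => (x : {x // x ∈ T}))
          (fun x : {a // ¬ a ∈ s} => (x : {x // x ∈ T}))
          = Matrix.diagonal (fun x : {a // ¬ a ∈ s} => q ↑↑x)
            * (K.submatrix (fun x : {a // ¬ a ∈ s} => (↑↑x : Fin n))
                (fun x : {a // ¬ a ∈ s} => (↑↑x : Fin n))) := by
        ext i j
        simp [Matrix.diagonal_mul]
      rw [hm, Matrix.det_mul, Matrix.det_diagonal]
      congr 1
      · rw [← Finset.prod_coe_sort S q]
        exact Fintype.prod_equiv eS _ _ (fun a => rfl)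
      · have : K.submatrix (fun x : {a // ¬ a ∈ s} => (↑↑x : Fin n))
            (fun x : {a // ¬ a ∈ s} => (↑↑x : Fin n))
            = (K.submatrix (fun i : {x // x ∈ S} => (i : Fin n))
                (fun i : {x // x ∈ S} => (i : Fin n))).submatrix eS eS := rfl
        rw [this, Matrix.det_submatrix_equiv_self, pminor]
    rw [hdet]
    have h1 : T \ S = s.image c := by
      rw [hS, Finset.sdiff_sdiff_self_left, Finset.inter_eq_right.2 himg]
    have h2 : ∏ i ∈ T \ S, d i = ∏ i ∈ s, d ↑i := by
      rw [h1, Finset.prod_image (fun a _ b _ h => Subtype.coe_inj.1 h)]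
    rw [h2]

lemma sum_superset_prod {n : ℕ} (T A : Finset (Fin n)) (p : Fin n → ℝ) :
    ∑ B ∈ Finset.univ.filter (fun B : Finset (Fin n) => T ⊆ B),
        ∏ i, (if ((i ∈ B) ↔ (i ∈ A)) then 1 - p i else p i)
      = ∏ i ∈ T, (if i ∈ A then 1 - p i else p i) := by
  classical
  have step : ∑ B ∈ Finset.univ.filter (fun B : Finset (Fin n) => T ⊆ B),
        ∏ i, (if ((i ∈ B) ↔ (i ∈ A)) then 1 - p i else p i)
      = ∑ C ∈ Tᶜ.powerset, ∏ i, (if ((i ∈ C ∪ T) ↔ (i ∈ A)) then 1 - p i else p i) := by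
    refine Finset.sum_nbij' (fun B => B \ T) (fun C => C ∪ T) ?_ ?_ ?_ ?_ ?_
    · intro B hB
      simp only [Finset.mem_powerset]
      intro x hx
      exact Finset.mem_compl.2 (Finset.mem_sdiff.1 hx).2
    · intro C hC
      simp only [Finset.mem_filter, Finset.mem_univ, true_and]
      exact Finset.subset_union_right
    · intro B hB
      have hTB := (Finset.mem_filter.1 hB).2
      rw [Finset.sdiff_union_self_eq_union, Finset.union_eq_left.2 hTB]
    · intro C hC
      have hd : ∀ x ∈ C, x ∉ T := fun x hx =>
        Finset.mem_compl.1 (Finset.mem_powerset.1 hC hx)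
      ext x
      simp only [Finset.mem_sdiff, Finset.mem_union]
      constructor
      · rintro ⟨h1 | h1, h2⟩
        · exact h1
        · exact absurd h1 h2
      · intro hx
        exact ⟨Or.inl hx, fun hT => hd x hx hT⟩
    · intro B hB
      have hTB := (Finset.mem_filter.1 hB).2
      have hBT : B \ T ∪ T = B := by
        rw [Finset.sdiff_union_self_eq_union, Finset.union_eq_left.2 hTB]
      rw [hBT]
  rw [step]
  have hsplit : ∀ C ∈ Tᶜ.powerset,
      ∏ i, (if ((i ∈ C ∪ T) ↔ (i ∈ A)) then 1 - p i else p i)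
        = (∏ i ∈ T, (if i ∈ A then 1 - p i else p i)) *
          ((∏ i ∈ C, (if i ∈ A then 1 - p i else p i)) *
            ∏ i ∈ Tᶜ \ C, (if i ∈ A then p i else 1 - p i)) := by
    intro C hC
    have hC' := Finset.mem_powerset.1 hC
    rw [← Finset.prod_mul_prod_compl T
      (fun i => if ((i ∈ C ∪ T) ↔ (i ∈ A)) then 1 - p i else p i)]
    congr 1
    · refine Finset.prod_congr rfl fun i hi => ?_
      simp [Finset.mem_union, hi]
    · rw [← Finset.prod_sdiff hC', mul_comm]
      congr 1
      · refine Finset.prod_congr rfl fun i hi => ?_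
        simp [Finset.mem_union, hi, (Finset.mem_compl.1 (hC' hi))]
      · refine Finset.prod_congr rfl fun i hi => ?_
        have h1 : i ∉ C := (Finset.mem_sdiff.1 hi).2
        have h2 : i ∉ T := Finset.mem_compl.1 (Finset.mem_sdiff.1 hi).1
        by_cases h : i ∈ A <;> simp [Finset.mem_union, h1, h2, h]
  rw [Finset.sum_congr rfl hsplit, ← Finset.mul_sum]
  have hone : ∑ C ∈ Tᶜ.powerset,
      (∏ i ∈ C, (if i ∈ A then 1 - p i else p i)) *
        ∏ i ∈ Tᶜ \ C, (if i ∈ A then p i else 1 - p i) = 1 := by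
    rw [← Finset.prod_add]
    have : ∀ i ∈ Tᶜ, ((if i ∈ A then 1 - p i else p i) + (if i ∈ A then p i else 1 - p i))
        = (1 : ℝ) := by
      intro i _
      by_cases h : i ∈ A <;> simp [h]
    rw [Finset.prod_congr rfl this, Finset.prod_const_one]
  rw [hone, mul_one]


lemma prod_if_expand {n : ℕ} (T A : Finset (Fin n)) (p : Fin n → ℝ) :
    ∏ i ∈ T, (if i ∈ A then 1 - p i else p i)
      = ∑ S ∈ T.powerset,
          (if S ⊆ A then ∏ i ∈ S, (1 - 2*p i) else 0) * ∏ i ∈ T \ S, p i := by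
  classical
  have h1 : ∀ i ∈ T, (if i ∈ A then 1 - p i else p i)
      = (if i ∈ A then 1 - 2*p i else 0) + p i := by
    intro i _
    by_cases h : i ∈ A <;> simp [h] <;> ring
  rw [Finset.prod_congr rfl h1, Finset.prod_add]
  refine Finset.sum_congr rfl fun S _ => ?_
  congr 1
  by_cases h : S ⊆ A
  · rw [if_pos h]
    exact Finset.prod_congr rfl fun i hi => if_pos (h hi)
  · rw [if_neg h]
    obtain ⟨i, hiS, hiA⟩ := Finset.not_subset.1 h
    exact Finset.prod_eq_zero hiS (if_neg hiA)

theorem random_switching_is_DPP {n : ℕ} (K : Matrix (Fin n) (Fin n) ℝ)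
    (μ : Finset (Fin n) → ℝ) (hpos : ∀ A, 0 ≤ μ A)
    (hdpp : ∀ T : Finset (Fin n),
      ∑ A ∈ Finset.univ.filter (fun A : Finset (Fin n) => T ⊆ A), μ A = pminor K T)
    (p : Fin n → ℝ) (hp : ∀ i, p i ∈ Set.Icc (0 : ℝ) 1)
    -- `ν B` is the probability that the switched process equals `B`:
    (ν : Finset (Fin n) → ℝ)
    (hν : ∀ B : Finset (Fin n),
      ν B = ∑ A : Finset (Fin n), μ A * ∏ i, (if ((i ∈ B) ↔ (i ∈ A)) then 1 - p i else p i)) :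
    ∀ T : Finset (Fin n),
      ∑ B ∈ Finset.univ.filter (fun B : Finset (Fin n) => T ⊆ B), ν B
        = pminor (Matrix.diagonal p * (1 - K) + Matrix.diagonal (fun i => 1 - p i) * K) T := by
  intro T
  classical
  have hmat : Matrix.diagonal p * (1 - K) + Matrix.diagonal (fun i => 1 - p i) * K
      = Matrix.diagonal p + Matrix.diagonal (fun i => 1 - 2*p i) * K := by
    ext i j
    simp only [Matrix.add_apply, Matrix.mul_apply, Matrix.diagonal_mul, Matrix.sub_apply,
      Matrix.one_apply, Matrix.diagonal_apply, Matrix.diagonal, Matrix.of_apply]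
    by_cases h : i = j <;> simp [h] <;> ring
  rw [hmat, pminor_diagonal_add]
  have lhs1 : ∑ B ∈ Finset.univ.filter (fun B : Finset (Fin n) => T ⊆ B), ν B
      = ∑ A : Finset (Fin n), μ A * ∏ i ∈ T, (if i ∈ A then 1 - p i else p i) := by
    simp only [hν]
    rw [Finset.sum_comm]
    refine Finset.sum_congr rfl fun A _ => ?_
    rw [← Finset.mul_sum, sum_superset_prod]
  rw [lhs1]
  have lhs2 : ∑ A : Finset (Fin n), μ A * ∏ i ∈ T, (if i ∈ A then 1 - p i else p i)
      = ∑ S ∈ T.powerset, pminor K S * ((∏ i ∈ S, (1 - 2*p i)) * ∏ i ∈ T \ S, p i) := by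
    simp only [prod_if_expand T _ p, Finset.mul_sum]
    rw [Finset.sum_comm]
    refine Finset.sum_congr rfl fun S hS => ?_
    have h1 : ∀ A : Finset (Fin n),
        μ A * ((if S ⊆ A then ∏ i ∈ S, (1 - 2*p i) else 0) * ∏ i ∈ T \ S, p i)
          = (if S ⊆ A then μ A * ((∏ i ∈ S, (1 - 2*p i)) * ∏ i ∈ T \ S, p i) else 0) := by
      intro A
      by_cases h : S ⊆ A <;> simp [h]
    rw [Finset.sum_congr rfl fun A _ => h1 A, ← Finset.sum_filter, ← Finset.sum_mul, hdpp]
  rw [lhs2]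
  refine Finset.sum_congr rfl fun S _ => ?_
  ring
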